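/- Let p ≥ 2 and ε > 0 be real numbers, and define L_ε : ℝⁿ → ℝ by L_ε(w) = (1/p)(ε² + |w|²)^{p/2}. Then L_ε is uniformly elliptic in the following sense: for all v, w ∈ ℝⁿ, (ε² + |w|²)^{(p−2)/2} |v|² ≤ D²L_ε(w)[v, v] ≤ (p−1)(ε² + |w|²)^{(p−2)/2} |v|², where D²L_ε(w) denotes the second derivative of L_ε at w viewed as a symmetric bilinear form. -/

import Mathlib

open Real

variable {n : ℕ}

local notation "H" => EuclideanSpace ℝ (Fin n)

noncomputable def gd (n : ℕ) (p ε : ℝ) (w : EuclideanSpace ℝ (Fin n)) : ℝ :=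
  (ε ^ 2 + ‖w‖ ^ 2) ^ (p / 2 - 1)

lemma hg_pos {ε : ℝ} (hε : 0 < ε) (w : H) : (0:ℝ) < ε ^ 2 + ‖w‖ ^ 2 := by positivity

lemma hasFDerivAt_g {ε : ℝ} (w : H) :
    HasFDerivAt (fun w : H => ε ^ 2 + ‖w‖ ^ 2) (2 • innerSL ℝ w) w := by
  simpa using (hasStrictFDerivAt_norm_sq w).hasFDerivAt

lemma hasFDerivAt_L {p ε : ℝ} (hp : 2 ≤ p) (hε : 0 < ε) (w : H) :
    HasFDerivAt (fun w : H => (1 / p) * (ε ^ 2 + ‖w‖ ^ 2) ^ (p / 2))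
      (gd n p ε w • innerSL ℝ w) w := by
  have hp0 : p ≠ 0 := by linarith
  have h := ((hasFDerivAt_g (ε := ε) w).rpow_const (p := p / 2)
      (Or.inl (hg_pos hε w).ne')).const_mul (1 / p)
  refine h.congr_fderiv ?_
  ext v
  simp only [gd, ContinuousLinearMap.smul_apply, ContinuousLinearMap.coe_smul',
    Pi.smul_apply, smul_eq_mul]
  field_simp
  ring

open scoped RealInnerProductSpace

noncomputable def J (n : ℕ) : EuclideanSpace ℝ (Fin n) →L[ℝ] EuclideanSpace ℝ (Fin n) →L[ℝ] ℝ :=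
  (isBoundedBilinearMap_inner (𝕜 := ℝ)).toContinuousLinearMap

@[simp] lemma J_apply (w v : H) : J n w v = ⟪w, v⟫ := rfl

lemma innerSL_eq_J (w : H) : innerSL ℝ w = J n w := by ext v; rfl

lemma second_eval {p ε : ℝ} (hp : 2 ≤ p) (hε : 0 < ε) (w v : H) :
    (fderiv ℝ (fderiv ℝ
        (fun w : H => (1 / p) * (ε ^ 2 + ‖w‖ ^ 2) ^ (p / 2))) w v) v =
      (ε ^ 2 + ‖w‖ ^ 2) ^ (p / 2 - 1) * ‖v‖ ^ 2 +
        (p - 2) * (ε ^ 2 + ‖w‖ ^ 2) ^ (p / 2 - 2) * (⟪w, v⟫ * ⟪w, v⟫) := by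
  have h1 : fderiv ℝ (fun w : H => (1 / p) * (ε ^ 2 + ‖w‖ ^ 2) ^ (p / 2)) =
      fun w : H => gd n p ε w • J n w := by
    funext w
    rw [(hasFDerivAt_L hp hε w).fderiv, innerSL_eq_J]
  rw [h1]
  have hgd : HasFDerivAt (gd n p ε)
      (((p / 2 - 1) * (ε ^ 2 + ‖w‖ ^ 2) ^ (p / 2 - 1 - 1)) • (2 • innerSL ℝ w)) w :=
    (hasFDerivAt_g (ε := ε) w).rpow_const (p := p / 2 - 1) (Or.inl (hg_pos hε w).ne')
  have hF : HasFDerivAt (fun w : H => gd n p ε w • J n w)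
      (gd n p ε w • J n +
        (((p / 2 - 1) * (ε ^ 2 + ‖w‖ ^ 2) ^ (p / 2 - 1 - 1)) •
          (2 • innerSL ℝ w)).smulRight (J n w)) w :=
    hgd.smul (J n).hasFDerivAt
  rw [hF.fderiv]
  simp only [gd, ContinuousLinearMap.add_apply, ContinuousLinearMap.smul_apply,
    ContinuousLinearMap.smulRight_apply, smul_eq_mul, innerSL_apply_apply, J_apply]
  rw [real_inner_self_eq_norm_sq, show p / 2 - 1 - 1 = p / 2 - 2 by ring]
  ring

/-- Lemma (L-properties, part (c), ellipticity): the regularized p-Dirichlet integrand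
`L_ε(w) = (1/p)(ε² + |w|²)^{p/2}` is uniformly elliptic:
`(ε²+|w|²)^{(p−2)/2}|v|² ≤ D²L_ε(w)[v,v] ≤ (p−1)(ε²+|w|²)^{(p−2)/2}|v|²`. -/
theorem regularized_integrand_elliptic (n : ℕ) (p ε : ℝ) (hp : 2 ≤ p) (hε : 0 < ε) :
    ∀ w v : EuclideanSpace ℝ (Fin n),
      (ε ^ 2 + ‖w‖ ^ 2) ^ ((p - 2) / 2) * ‖v‖ ^ 2 ≤
        (fderiv ℝ
          (fderiv ℝ
            (fun w : EuclideanSpace ℝ (Fin n) => (1 / p) * (ε ^ 2 + ‖w‖ ^ 2) ^ (p / 2)))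
          w v) v ∧
      (fderiv ℝ
          (fderiv ℝ
            (fun w : EuclideanSpace ℝ (Fin n) => (1 / p) * (ε ^ 2 + ‖w‖ ^ 2) ^ (p / 2)))
          w v) v ≤
        (p - 1) * (ε ^ 2 + ‖w‖ ^ 2) ^ ((p - 2) / 2) * ‖v‖ ^ 2 := by
  intro w v
  have hg := hg_pos (n := n) hε w
  set g : ℝ := ε ^ 2 + ‖w‖ ^ 2 with hgdef
  rw [second_eval hp hε w v, ← hgdef]
  have hexp : (p - 2) / 2 = p / 2 - 1 := by ring
  rw [hexp]
  have h1 : (0:ℝ) ≤ g ^ (p / 2 - 2) := (Real.rpow_pos_of_pos hg _).le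
  constructor
  · nlinarith [sq_nonneg (⟪w, v⟫), mul_nonneg h1 (sq_nonneg (⟪w, v⟫))]
  · have hiner : ⟪w, v⟫ * ⟪w, v⟫ ≤ ‖w‖ ^ 2 * ‖v‖ ^ 2 := by
      have := abs_real_inner_le_norm w v
      nlinarith [abs_nonneg (⟪w, v⟫), sq_abs (⟪w, v⟫)]
    have hib : ⟪w, v⟫ * ⟪w, v⟫ ≤ g * ‖v‖ ^ 2 := by nlinarith [sq_nonneg ‖v‖, sq_nonneg ε]
    have hmul : g ^ (p / 2 - 2) * g = g ^ (p / 2 - 1) := by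
      rw [show p / 2 - 1 = (p / 2 - 2) + 1 by ring, Real.rpow_add hg, Real.rpow_one]
    have h2 : g ^ (p / 2 - 2) * (⟪w, v⟫ * ⟪w, v⟫) ≤ g ^ (p / 2 - 2) * (g * ‖v‖ ^ 2) :=
      mul_le_mul_of_nonneg_left hib h1
    have h3 : g ^ (p / 2 - 2) * (g * ‖v‖ ^ 2) = g ^ (p / 2 - 1) * ‖v‖ ^ 2 := by
      rw [← hmul]; ring
    have key : (p - 2) * g ^ (p / 2 - 2) * (⟪w, v⟫ * ⟪w, v⟫) ≤
        (p - 2) * (g ^ (p / 2 - 1) * ‖v‖ ^ 2) := by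
      rw [← h3, mul_assoc]
      exact mul_le_mul_of_nonneg_left h2 (by linarith)
    nlinarith [key]
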